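/- (Rule 2, simple version: action/observation exchange) In an info-causal DAG, if B is d-separated from A given C in the info-intervention graph G^{σ(x̃_A)}, then P(x_B | σ(x̃_A), x_C) = P(x_B | x̃_A, x_C), i.e., the intervention conditional equals the ordinary observational conditional. -/
import Mathlib


open Finset

/-- The info-intervention distribution `P(x | σ(x̃_A)) = ∏_{k∈V} P(x_k | x*_{pa(k)})`,
where the kernel `q v a x` stands for `P(x_v = a | x_{pa(v)})` (depending only on the
parent coordinates of `x`), and `x*_j = x̃_j` if `j ∈ A`, else `x_j`. -/
noncomputable def infoDist {V Ω : Type*} [Fintype V] [DecidableEq V]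
    (q : V → Ω → (V → Ω) → ℝ) (A : Finset V) (xt : V → Ω) (x : V → Ω) : ℝ :=
  ∏ v : V, q v (x v) (fun j => if j ∈ A then xt j else x j)

/-- Marginal of a (discrete) distribution `p` on the coordinates in `S`, evaluated at `y`. -/
noncomputable def Marg {V Ω : Type*} [Fintype V] [DecidableEq V] [Fintype Ω] [DecidableEq Ω]
    (p : (V → Ω) → ℝ) (S : Finset V) (y : V → Ω) : ℝ :=
  ∑ x : V → Ω, if ∀ i ∈ S, x i = y i then p x else 0

/-- `b` is a collider on a path segment `a — b — c` for edge relation `E`: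
both edges point into `b`. -/
def IsCollider {V : Type*} (E : V → V → Prop) (a b c : V) : Prop := E a b ∧ E c b

/-- The walk `f` (a sequence of vertices, consecutive ones adjacent in either direction)
is blocked at internal position `i` by the conditioning set `Z`: either `f i` is a
non-collider lying in `Z`, or `f i` is a collider such that neither it nor any of its
descendants lies in `Z`. -/
def BlockedAt {V : Type*} (E : V → V → Prop) (Z : Set V) (f : ℕ → V) (i : ℕ) : Prop :=
  (¬ IsCollider E (f (i - 1)) (f i) (f (i + 1)) ∧ f i ∈ Z) ∨
  (IsCollider E (f (i - 1)) (f i) (f (i + 1)) ∧ f i ∉ Z ∧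
    ∀ z ∈ Z, ¬ Relation.TransGen E (f i) z)

/-- d-separation: every walk from `B` to `C` (consecutive vertices adjacent in `E` in
either direction) is blocked by `Z` at some internal position. -/
def dSep {V : Type*} (E : V → V → Prop) (B C Z : Set V) : Prop :=
  ∀ (n : ℕ) (f : ℕ → V), f 0 ∈ B → f n ∈ C →
    (∀ i < n, E (f i) (f (i + 1)) ∨ E (f (i + 1)) (f i)) →
    ∃ i, 0 < i ∧ i < n ∧ BlockedAt E Z f i

/-- Conditional independence of the coordinate sets `S` and `T` given `W` under the
(discrete) distribution `p`: `P(x_S, x_T, x_W) P(x_W) = P(x_S, x_W) P(x_T, x_W)`. -/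
noncomputable def CondIndep {V Ω : Type*} [Fintype V] [DecidableEq V] [Fintype Ω]
    [DecidableEq Ω] (p : (V → Ω) → ℝ) (S T W : Finset V) : Prop :=
  ∀ y : V → Ω, Marg p (S ∪ T ∪ W) y * Marg p W y = Marg p (S ∪ W) y * Marg p (T ∪ W) y

/-- Rule 2, simple version: action/observation exchange. If `B` is
d-separated from `A` given `C` in the info-intervention graph `G^{σ(x̃_A)}` (edges out of
`A` removed), then `P(x_B | σ(x̃_A), x_C) = P(x_B | x̃_A, x_C)`: the intervention
conditional equals the ordinary observational conditional (at the point `z` agreeing with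
`x̃` on `A` and with `y` elsewhere). The global Markov property for the intervention
distribution is assumed, as allowed. -/

lemma marg_congr {V Ω : Type*} [Fintype V] [DecidableEq V] [Fintype Ω] [DecidableEq Ω]
    (p : (V → Ω) → ℝ) (S : Finset V) (y y' : V → Ω) (h : ∀ i ∈ S, y i = y' i) :
    Marg p S y = Marg p S y' := by
  unfold Marg
  refine Finset.sum_congr rfl fun x _ => ?_
  congr 1
  simp only [eq_iff_iff]
  constructor
  · intro hx i hi; rw [hx i hi, h i hi]
  · intro hx i hi; rw [hx i hi, h i hi]

lemma marg_info_eq_margP {V Ω : Type*} [Fintype V] [DecidableEq V] [Fintype Ω] [DecidableEq Ω]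
    (q : V → Ω → (V → Ω) → ℝ) (P : (V → Ω) → ℝ)
    (hfact : ∀ x, P x = ∏ v : V, q v (x v) x)
    (A S : Finset V) (xt z : V → Ω) (hAS : A ⊆ S) (hz : ∀ j ∈ A, z j = xt j) :
    Marg (infoDist q A xt) S z = Marg P S z := by
  unfold Marg
  refine Finset.sum_congr rfl fun x _ => ?_
  by_cases hx : ∀ i ∈ S, x i = z i
  · rw [if_pos hx, if_pos hx]
    have hfun : (fun j => if j ∈ A then xt j else x j) = x := by
      funext j
      by_cases hj : j ∈ A
      · simp [hj, ← hz j hj, hx j (hAS hj)]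
      · simp [hj]
    rw [infoDist, hfun, hfact]
  · simp [hx]

theorem info_rule2_simple {V Ω : Type*} [Fintype V] [DecidableEq V]
    [Fintype Ω] [DecidableEq Ω]
    (pa : V → Finset V) (q : V → Ω → (V → Ω) → ℝ) (P : (V → Ω) → ℝ)
    (hloc : ∀ v a (x y : V → Ω), (∀ j ∈ pa v, x j = y j) → q v a x = q v a y)
    (hq0 : ∀ v a x, 0 ≤ q v a x) (hnorm : ∀ v x, ∑ a : Ω, q v a x = 1)
    (hfact : ∀ x, P x = ∏ v : V, q v (x v) x)
    (hacyc : ∀ v, ¬ Relation.TransGen (fun u w : V => u ∈ pa w) v v)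
    (A B C : Finset V) (hAB : Disjoint A B) (hAC : Disjoint A C) (hBC : Disjoint B C)
    (xt : V → Ω)
    (hMarkov : ∀ S T W : Finset V,
      dSep (fun u v => u ∈ pa v ∧ u ∉ A) (S : Set V) (T : Set V) (W : Set V) →
        CondIndep (infoDist q A xt) S T W)
    (hd : dSep (fun u v => u ∈ pa v ∧ u ∉ A) (B : Set V) (A : Set V) (C : Set V))
    (y : V → Ω)
    (hpos1 : Marg (infoDist q A xt) C y ≠ 0)
    (hpos2 : Marg (infoDist q A xt) (A ∪ C) (fun j => if j ∈ A then xt j else y j) ≠ 0)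
    (hpos3 : Marg P (C ∪ A) (fun j => if j ∈ A then xt j else y j) ≠ 0) :
    Marg (infoDist q A xt) (B ∪ C) y / Marg (infoDist q A xt) C y
      = Marg P (B ∪ C ∪ A) (fun j => if j ∈ A then xt j else y j)
          / Marg P (C ∪ A) (fun j => if j ∈ A then xt j else y j) := by
  set Q := infoDist q A xt with hQ
  set z : V → Ω := fun j => if j ∈ A then xt j else y j with hzdef
  have hzA : ∀ j ∈ A, z j = xt j := fun j hj => by simp [hzdef, hj]
  have hznA : ∀ j, j ∉ A → z j = y j := fun j hj => by simp [hzdef, hj]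
  have hCI := hMarkov B A C hd z
  -- rewrite the four marginals
  have e1 : Marg Q (B ∪ A ∪ C) z = Marg P (B ∪ C ∪ A) z := by
    have : (B ∪ A ∪ C) = (B ∪ C ∪ A) := by
      ext i; simp [Finset.mem_union]; tauto
    rw [this]
    exact marg_info_eq_margP q P hfact A _ xt z (by intro i hi; simp [Finset.mem_union, hi]) hzA
  have e2 : Marg Q (A ∪ C) z = Marg P (C ∪ A) z := by
    have : (A ∪ C) = (C ∪ A) := Finset.union_comm A C
    rw [this]
    exact marg_info_eq_margP q P hfact A _ xt z (by intro i hi; simp [Finset.mem_union, hi]) hzA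
  have e3 : Marg Q (B ∪ C) z = Marg Q (B ∪ C) y := by
    refine marg_congr Q _ z y fun i hi => hznA i ?_
    rcases Finset.mem_union.mp hi with h | h
    · exact fun hA => (Finset.disjoint_left.mp hAB) hA h
    · exact fun hA => (Finset.disjoint_left.mp hAC) hA h
  have e4 : Marg Q C z = Marg Q C y :=
    marg_congr Q _ z y fun i hi => hznA i fun hA => (Finset.disjoint_left.mp hAC) hA hi
  rw [e1, e2, e3, e4] at hCI
  rw [div_eq_div_iff hpos1 hpos3]
  linarith [hCI]
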